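/- Let M be a maximum cardinality matching of a finite bipartite graph H and let x be a node of H. Then mm(H − {x}) = mm(H) − 1 if x is matched by M and there is no even-length alternating path for M starting at x; otherwise mm(H − {x}) = mm(H). -/

import Mathlib

open Finset

variable {α : Type*} [Fintype α] [DecidableEq α]

/-- `M` is a matching (set of pairwise node-disjoint edges) of the unweighted
graph with adjacency relation `adj`. -/
def IsUMatching (adj : α → α → Prop) (M : Finset (α × α)) : Prop :=
  (∀ e ∈ M, adj e.1 e.2) ∧ (∀ e ∈ M, e.1 ≠ e.2) ∧
  (∀ e ∈ M, ∀ f ∈ M, e ≠ f →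
    e.1 ≠ f.1 ∧ e.1 ≠ f.2 ∧ e.2 ≠ f.1 ∧ e.2 ≠ f.2)

open Classical in
/-- The maximum cardinality of a matching of the graph with adjacency `adj`. -/
noncomputable def mm (adj : α → α → Prop) : ℕ :=
  Finset.sup ((Finset.univ : Finset (α × α)).powerset.filter fun M => IsUMatching adj M)
    Finset.card

/-- The (undirected) edge `ab` belongs to the matching `M`. -/
def inMatch (M : Finset (α × α)) (a b : α) : Prop :=
  (a, b) ∈ M ∨ (b, a) ∈ M

/-- The node `a` is matched by the matching `M`. -/
def matchedBy (M : Finset (α × α)) (a : α) : Prop :=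
  ∃ e ∈ M, e.1 = a ∨ e.2 = a

/-- `p` is an alternating path for the matching `M`: a nonempty simple path whose
edges alternate between `M` and its complement (edge `i` is in `M` iff
`i % 2 = r` for a fixed phase `r`), and which contains the matched edge of each
of its endpoints that is matched by `M`.  A zero-length path consists of a
single unmatched node. -/
def IsAltPath (adj : α → α → Prop) (M : Finset (α × α)) (p : List α) : Prop :=
  p ≠ [] ∧ p.Nodup ∧ List.Chain' adj p ∧
  ∃ r : ℕ,
    (∀ i, ∀ h : i + 1 < p.length,
      (inMatch M (p.get ⟨i, Nat.lt_of_succ_lt h⟩) (p.get ⟨i + 1, h⟩) ↔ i % 2 = r)) ∧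
    (∀ h : p ≠ [], matchedBy M (p.head h) → 1 < p.length ∧ r = 0) ∧
    (∀ h : p ≠ [], matchedBy M (p.getLast h) → 1 < p.length ∧ (p.length - 2) % 2 = r)

/-- There is an even-length (possibly zero-length) alternating path for `M`
starting at `a`. -/
def EvenAltFrom (adj : α → α → Prop) (M : Finset (α × α)) (a : α) : Prop :=
  ∃ p : List α, IsAltPath adj M p ∧ p.length % 2 = 1 ∧ ∃ h : p ≠ [], p.head h = a


set_option linter.unusedSectionVars false
set_option linter.unusedVariables false

section helpers

variable {adj : α → α → Prop} {M N : Finset (α × α)}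

lemma um_edge_eq (hM : IsUMatching adj M) {e f : α × α} (he : e ∈ M) (hf : f ∈ M)
    (h : e.1 = f.1 ∨ e.1 = f.2 ∨ e.2 = f.1 ∨ e.2 = f.2) : e = f := by
  by_contra hne
  have := hM.2.2 e he f hf hne
  tauto

lemma inMatch_symm {a b : α} (h : inMatch M a b) : inMatch M b a := h.symm

lemma inMatch_adj (hM : IsUMatching adj M) (hsymm : ∀ a b, adj a b → adj b a)
    {a b : α} (h : inMatch M a b) : adj a b := by
  rcases h with h | h
  · exact hM.1 _ h
  · exact hsymm _ _ (hM.1 _ h)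

lemma inMatch_ne (hM : IsUMatching adj M) {a b : α} (h : inMatch M a b) : a ≠ b := by
  rcases h with h | h
  · exact hM.2.1 _ h
  · exact (hM.2.1 _ h).symm

lemma inMatch_right_unique (hM : IsUMatching adj M) {a b c : α}
    (h1 : inMatch M a b) (h2 : inMatch M a c) : b = c := by
  rcases h1 with h1 | h1 <;> rcases h2 with h2 | h2 <;>
  · have := um_edge_eq hM h1 h2 (by simp)
    simp_all [Prod.ext_iff]
    try tauto

lemma matchedBy_iff {a : α} : matchedBy M a ↔ ∃ b, inMatch M a b := by
  constructor
  · rintro ⟨⟨u, v⟩, he, h | h⟩ <;> simp_all [inMatch]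
    · exact ⟨v, Or.inl he⟩
    · exact ⟨u, Or.inr he⟩
  · rintro ⟨b, h | h⟩
    · exact ⟨(a, b), h, Or.inl rfl⟩
    · exact ⟨(b, a), h, Or.inr rfl⟩

lemma matchedBy_of_inMatch {a b : α} (h : inMatch M a b) : matchedBy M a :=
  matchedBy_iff.2 ⟨b, h⟩

lemma inMatch_eq_of_mem (hM : IsUMatching adj M) {a b : α} (h : inMatch M a b)
    {f : α × α} (hf : f ∈ M) (hshare : f.1 = a ∨ f.2 = a) :
    f = (a, b) ∨ f = (b, a) := by
  rcases h with h | h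
  · have := um_edge_eq hM hf h (by rcases hshare with h' | h' <;> simp [h'])
    exact Or.inl this
  · have := um_edge_eq hM hf h (by rcases hshare with h' | h' <;> simp [h'])
    exact Or.inr this

lemma le_mm (hN : IsUMatching adj N) : N.card ≤ mm adj := by
  classical
  unfold mm
  refine Finset.le_sup ?_
  simp only [Finset.mem_filter, Finset.mem_powerset]
  exact ⟨Finset.subset_univ _, hN⟩

lemma mm_le {c : ℕ} (h : ∀ N : Finset (α × α), IsUMatching adj N → N.card ≤ c) :
    mm adj ≤ c := by
  classical
  refine Finset.sup_le fun N hN => h N ?_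
  simp only [Finset.mem_filter] at hN
  convert hN.2

lemma card_range_filter_mod2 (n : ℕ) :
    ((range n).filter (fun i => i % 2 = 0)).card = (n+1)/2 ∧
    ((range n).filter (fun i => i % 2 = 1)).card = n / 2 := by
  induction n with
  | zero => simp
  | succ n ih =>
    rw [Finset.range_add_one, Finset.filter_insert, Finset.filter_insert]
    rcases Nat.even_or_odd n with h | h
    · have h0 : n % 2 = 0 := Nat.even_iff.1 h
      rw [if_pos h0, if_neg (by omega), Finset.card_insert_of_notMem (by simp)]
      omega
    · have h1 : n % 2 = 1 := Nat.odd_iff.1 h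
      rw [if_neg (by omega), if_pos h1, Finset.card_insert_of_notMem (by simp)]
      omega

end helpers

open Classical in
lemma toggle {adj' : α → α → Prop} {N : Finset (α × α)} (hN : IsUMatching adj' N)
    (L : ℕ) (hL : 2 ≤ L) (v : ℕ → α)
    (hinj : ∀ i < L, ∀ j < L, v i = v j → i = j) (s : ℕ) (hs : s < 2)
    (hadj : ∀ i, i + 1 < L → ¬ i % 2 = s → adj' (v i) (v (i+1)))
    (hK : ∀ f ∈ N, (∃ j < L, f.1 = v j ∨ f.2 = v j) →
      ∃ i, i + 1 < L ∧ i % 2 = s ∧ (f = (v i, v (i+1)) ∨ f = (v (i+1), v i))) :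
    ∃ N' : Finset (α × α), IsUMatching adj' N' ∧
      N.card + ((range (L-1)).filter (fun i => ¬ i % 2 = s)).card ≤
        N'.card + ((range (L-1)).filter (fun i => i % 2 = s)).card ∧
      ∀ f ∈ N', (f ∈ N ∧ ∀ j < L, f.1 ≠ v j ∧ f.2 ≠ v j) ∨
        ∃ i, i + 1 < L ∧ ¬ i % 2 = s ∧ f = (v i, v (i+1)) := by
  classical
  set T : Finset (α × α) := N.filter (fun f => ∀ j < L, f.1 ≠ v j ∧ f.2 ≠ v j) with hT
  set O : Finset (α × α) := ((range (L-1)).filter (fun i => ¬ i % 2 = s)).image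
      (fun i => (v i, v (i+1))) with hO
  have hOmem : ∀ f ∈ O, ∃ i, i + 1 < L ∧ ¬ i % 2 = s ∧ f = (v i, v (i+1)) := by
    intro f hf
    simp only [hO, mem_image, mem_filter, mem_range] at hf
    obtain ⟨i, ⟨hi, hp⟩, rfl⟩ := hf
    exact ⟨i, by omega, hp, rfl⟩
  have hTmem : ∀ f ∈ T, f ∈ N ∧ ∀ j < L, f.1 ≠ v j ∧ f.2 ≠ v j := by
    intro f hf; simpa [hT, mem_filter] using hf
  have hdisj : Disjoint T O := by
    rw [Finset.disjoint_left]
    intro f hfT hfO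
    obtain ⟨i, hi, _, rfl⟩ := hOmem f hfO
    exact ((hTmem _ hfT).2 i (by omega)).1 rfl
  have hOcard : O.card = ((range (L-1)).filter (fun i => ¬ i % 2 = s)).card := by
    rw [hO]
    apply Finset.card_image_of_injOn
    intro i hi j hj hij
    simp only [mem_coe, mem_filter, mem_range] at hi hj
    have := congrArg Prod.fst hij
    exact hinj i (by omega) j (by omega) this
  set Tc : Finset (α × α) := N.filter (fun f => ∃ j < L, f.1 = v j ∨ f.2 = v j) with hTc
  have hsplit : T.card + Tc.card = N.card := by
    rw [hT, hTc]
    rw [show (N.filter (fun f => ∃ j < L, f.1 = v j ∨ f.2 = v j)) =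
      (N.filter (fun f => ¬ ∀ j < L, f.1 ≠ v j ∧ f.2 ≠ v j)) from ?_]
    · exact Finset.card_filter_add_card_filter_not _
    · apply Finset.filter_congr
      intro f _
      constructor
      · rintro ⟨j, hj, h | h⟩ hall
        · exact (hall j hj).1 h
        · exact (hall j hj).2 h
      · intro h
        push_neg at h
        obtain ⟨j, hj, h⟩ := h
        rcases Classical.em (f.1 = v j) with h1 | h1
        · exact ⟨j, hj, Or.inl h1⟩
        · exact ⟨j, hj, Or.inr (h h1)⟩
  have hTcle : Tc.card ≤ ((range (L-1)).filter (fun i => i % 2 = s)).card := by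
    set F : α × α → ℕ := fun f =>
      if h : ∃ i, i + 1 < L ∧ i % 2 = s ∧ (f = (v i, v (i+1)) ∨ f = (v (i+1), v i))
      then h.choose else 0 with hF
    have hFspec : ∀ f ∈ Tc, (F f) + 1 < L ∧ (F f) % 2 = s ∧
        (f = (v (F f), v (F f + 1)) ∨ f = (v (F f + 1), v (F f))) := by
      intro f hf
      simp only [hTc, mem_filter] at hf
      have h := hK f hf.1 hf.2
      rw [hF]; simp only
      rw [dif_pos h]
      exact h.choose_spec
    apply Finset.card_le_card_of_injOn F
    · intro f hf
      obtain ⟨h1, h2, _⟩ := hFspec f hf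
      simp only [Finset.mem_coe, mem_filter, mem_range]
      exact ⟨by omega, h2⟩
    · intro f hf g hg hfg
      rw [Finset.mem_coe] at hf hg
      obtain ⟨hf1, hf2, hf3⟩ := hFspec f hf
      obtain ⟨hg1, hg2, hg3⟩ := hFspec g hg
      rw [hfg] at hf3
      have hfN : f ∈ N := (Finset.mem_filter.1 hf).1
      have hgN : g ∈ N := (Finset.mem_filter.1 hg).1
      by_contra hfgne
      have h4 := hN.2.2 f hfN g hgN hfgne
      rcases hf3 with h | h <;> rcases hg3 with h' | h'
      · exact hfgne (h.trans h'.symm)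
      · have e1 : f.1 = v (F g) := congrArg Prod.fst h
        have e2 : g.2 = v (F g) := congrArg Prod.snd h'
        exact h4.2.1 (e1.trans e2.symm)
      · have e1 : f.1 = v (F g + 1) := congrArg Prod.fst h
        have e2 : g.2 = v (F g + 1) := congrArg Prod.snd h'
        exact h4.2.1 (e1.trans e2.symm)
      · exact hfgne (h.trans h'.symm)
  refine ⟨T ∪ O, ⟨?_, ?_, ?_⟩, ?_, ?_⟩
  · intro e he
    rcases Finset.mem_union.1 he with h | h
    · exact hN.1 e (hTmem e h).1
    · obtain ⟨i, hi, hp, rfl⟩ := hOmem e h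
      exact hadj i hi hp
  · intro e he
    rcases Finset.mem_union.1 he with h | h
    · exact hN.2.1 e (hTmem e h).1
    · obtain ⟨i, hi, hp, rfl⟩ := hOmem e h
      exact fun hh => by have := hinj i (by omega) (i+1) (by omega) hh; omega
  · intro e he f hf hef
    rcases Finset.mem_union.1 he with he' | he' <;> rcases Finset.mem_union.1 hf with hf' | hf'
    · exact hN.2.2 e (hTmem e he').1 f (hTmem f hf').1 hef
    · obtain ⟨i, hi, hp, rfl⟩ := hOmem f hf'
      have h2 := (hTmem e he').2
      exact ⟨(h2 i (by omega)).1, (h2 (i+1) (by omega)).1,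
        (h2 i (by omega)).2, (h2 (i+1) (by omega)).2⟩
    · obtain ⟨i, hi, hp, rfl⟩ := hOmem e he'
      have h2 := (hTmem f hf').2
      exact ⟨fun h => (h2 i (by omega)).1 h.symm, fun h => (h2 i (by omega)).2 h.symm,
        fun h => (h2 (i+1) (by omega)).1 h.symm, fun h => (h2 (i+1) (by omega)).2 h.symm⟩
    · obtain ⟨i, hi, hpi, rfl⟩ := hOmem e he'
      obtain ⟨j, hj, hpj, rfl⟩ := hOmem f hf'
      have hij : i ≠ j := fun h => hef (by rw [h])
      refine ⟨fun h => ?_, fun h => ?_, fun h => ?_, fun h => ?_⟩ <;>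
      · have := hinj _ (by omega) _ (by omega) h
        omega
  · have hcard : (T ∪ O).card = T.card + O.card := Finset.card_union_of_disjoint hdisj
    omega
  · intro f hf
    rcases Finset.mem_union.1 hf with h | h
    · exact Or.inl (hTmem f h)
    · exact Or.inr (hOmem f h)

section caseA
variable {adj : α → α → Prop} {M : Finset (α × α)} {x : α}

lemma caseA (hM : IsUMatching adj M) (hsymm : ∀ a b, adj a b → adj b a)
    (hx : matchedBy M x) (hev : EvenAltFrom adj M x) :
    ∃ N' : Finset (α × α), IsUMatching (fun a b => adj a b ∧ a ≠ x ∧ b ≠ x) N' ∧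
      M.card ≤ N'.card := by
  classical
  obtain ⟨p, ⟨hne, hnd, hch, r, hr, hhead, hlast⟩, hodd, hne2, hhx⟩ := hev
  set L := p.length with hLdef
  have hL1 : 1 < L := (hhead hne2 (by rwa [hhx])).1
  have hr0 : r = 0 := (hhead hne2 (by rwa [hhx])).2
  subst hr0
  set v : ℕ → α := fun i => p.getD i x with hvdef
  have hv : ∀ i, (h : i < L) → v i = p.get ⟨i, h⟩ := fun i h => List.getD_eq_getElem p x h
  have hinj : ∀ i < L, ∀ j < L, v i = v j → i = j := by
    intro i hi j hj hij
    rw [hv i hi, hv j hj] at hij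
    have := List.nodup_iff_injective_get.1 hnd hij
    exact congrArg Fin.val this
  have hx0 : v 0 = x := by
    rw [hv 0 (by omega), ← hhx, List.get_eq_getElem, List.head_eq_getElem_zero]
  have halt : ∀ i, i + 1 < L → (inMatch M (v i) (v (i+1)) ↔ i % 2 = 0) := by
    intro i hi
    rw [hv i (by omega), hv (i+1) hi]
    exact hr i hi
  have htail : ¬ matchedBy M (v (L-1)) := by
    intro h
    rw [hv (L-1) (by omega)] at h
    have h2 := hlast hne2 (by
      rw [List.getLast_eq_getElem, List.get_eq_getElem] at *
      exact h)
    omega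
  have hadj : ∀ i, i + 1 < L → ¬ i % 2 = 0 → adj (v i) (v (i+1)) := by
    intro i hi _
    rw [hv i (by omega), hv (i+1) hi]
    exact List.isChain_iff_getElem.1 hch i (by omega)
  have hK : ∀ f ∈ M, (∃ j < L, f.1 = v j ∨ f.2 = v j) →
      ∃ i, i + 1 < L ∧ i % 2 = 0 ∧ (f = (v i, v (i+1)) ∨ f = (v (i+1), v i)) := by
    rintro f hf ⟨j, hj, hor⟩
    have hmj : matchedBy M (v j) := ⟨f, hf, hor⟩
    have hjlt : j < L - 1 := by
      rcases Nat.lt_or_ge j (L-1) with h | h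
      · exact h
      · exact absurd (by rwa [show j = L - 1 by omega] at hmj) htail
    obtain ⟨i, hi1, hi2, hji⟩ : ∃ i, i % 2 = 0 ∧ i + 1 < L ∧ (j = i ∨ j = i + 1) := by
      rcases Nat.even_or_odd j with h | h
      · exact ⟨j, Nat.even_iff.1 h, by omega, Or.inl rfl⟩
      · have hj1 := Nat.odd_iff.1 h
        exact ⟨j - 1, by omega, by omega, by omega⟩
    have him : inMatch M (v i) (v (i+1)) := (halt i hi2).2 hi1
    refine ⟨i, hi2, hi1, ?_⟩
    rcases hji with rfl | rfl
    · exact inMatch_eq_of_mem hM him hf hor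
    · rcases inMatch_eq_of_mem hM (inMatch_symm him) hf hor with h | h
      · exact Or.inr h
      · exact Or.inl h
  obtain ⟨N', hN', hcard, hmem⟩ := toggle hM L (by omega) v hinj 0 (by omega) hadj hK
  have hBeq : (range (L-1)).filter (fun i => ¬ i % 2 = 0) =
      (range (L-1)).filter (fun i => i % 2 = 1) := by
    apply Finset.filter_congr
    intro a _
    constructor <;> (intro h'; omega)
  rw [hBeq, (card_range_filter_mod2 (L-1)).2] at hcard
  rw [(card_range_filter_mod2 (L-1)).1] at hcard
  have hcard2 : M.card ≤ N'.card := by omega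
  refine ⟨N', ⟨?_, hN'.2.1, hN'.2.2⟩, hcard2⟩
  intro e he
  refine ⟨hN'.1 e he, ?_⟩
  rcases hmem e he with ⟨_, havoid⟩ | ⟨i, hi, hpar, rfl⟩
  · have h0 := havoid 0 (by omega)
    rw [hx0] at h0
    exact h0
  · constructor
    · intro h
      have := hinj i (by omega) 0 (by omega) (by rw [hx0]; exact h)
      omega
    · intro h
      have := hinj (i+1) (by omega) 0 (by omega) (by rw [hx0]; exact h)
      omega

end caseA

section caseB

def Walk (M N : Finset (α × α)) (x : α) (n : ℕ) (v : ℕ → α) : Prop :=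
  v 0 = x ∧ (∀ i < n, ∀ j < n, v i = v j → i = j) ∧
  ∀ i, i + 1 < n →
    ((i % 2 = 0 → inMatch M (v i) (v (i+1)) ∧ ¬ inMatch N (v i) (v (i+1))) ∧
     (¬ i % 2 = 0 → inMatch N (v i) (v (i+1)) ∧ ¬ inMatch M (v i) (v (i+1))))

lemma caseB {adj : α → α → Prop} {M : Finset (α × α)} {x : α}
    (hM : IsUMatching adj M) (hsymm : ∀ a b, adj a b → adj b a)
    (hx : matchedBy M x) (hno : ¬ EvenAltFrom adj M x)
    (hMmax : ∀ M' : Finset (α × α), IsUMatching adj M' → M'.card ≤ M.card)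
    {N : Finset (α × α)}
    (hN : IsUMatching (fun a b => adj a b ∧ a ≠ x ∧ b ≠ x) N) :
    N.card + 1 ≤ M.card := by
  classical
  have hNadj : IsUMatching adj N := ⟨fun e he => (hN.1 e he).1, hN.2.1, hN.2.2⟩
  have hxN : ¬ matchedBy N x := by
    rintro ⟨e, he, h | h⟩
    · exact (hN.1 e he).2.1 h
    · exact (hN.1 e he).2.2 h
  set P : ℕ → Prop := fun n => ∃ v, Walk M N x n v with hPdef
  have hP1 : P 1 := ⟨fun _ => x, rfl, fun i hi j hj _ => by omega,
    fun i hi => absurd hi (by omega)⟩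
  have hbound : ∀ n, P n → n ≤ Fintype.card α := by
    rintro n ⟨v, hW⟩
    have hinj := hW.2.1
    have : Function.Injective (fun i : Fin n => v i) := by
      intro i j hij
      exact Fin.ext (hinj i i.2 j j.2 hij)
    exact Fintype.card_fin n ▸ Fintype.card_le_of_injective _ this
  set L := Nat.findGreatest P (Fintype.card α) with hLdef
  have hPL : P L := Nat.findGreatest_spec (hbound 1 hP1) hP1
  have hmax : ∀ n, P n → n ≤ L := fun n hn => Nat.le_findGreatest (hbound n hn) hn
  obtain ⟨v, hW⟩ := hPL
  have hv0 : v 0 = x := hW.1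
  have hinj : ∀ i < L, ∀ j < L, v i = v j → i = j := hW.2.1
  have hedge := hW.2.2
  have hL1 : 1 ≤ L := hmax 1 hP1
  have hMedge : ∀ i, i + 1 < L → i % 2 = 0 → inMatch M (v i) (v (i+1)) :=
    fun i h h2 => ((hedge i h).1 h2).1
  have hNedge : ∀ i, i + 1 < L → ¬ i % 2 = 0 → inMatch N (v i) (v (i+1)) :=
    fun i h h2 => ((hedge i h).2 h2).1
  have hext : ∀ w, (∀ j < L, w ≠ v j) →
      (((L-1) % 2 = 0 → inMatch M (v (L-1)) w ∧ ¬ inMatch N (v (L-1)) w) ∧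
       (¬ (L-1) % 2 = 0 → inMatch N (v (L-1)) w ∧ ¬ inMatch M (v (L-1)) w)) → False := by
    intro w hw hcond
    have hG : P (L+1) := by
      refine ⟨fun i => if i = L then w else v i, ?_, ?_, ?_⟩ <;> dsimp only
      · rw [if_neg (by omega : ¬ (0:ℕ) = L)]
        exact hv0
      · intro i hi j hj hij
        by_cases hiL : i = L <;> by_cases hjL : j = L
        · omega
        · rw [if_pos hiL, if_neg hjL] at hij
          exact absurd hij (hw j (by omega))
        · rw [if_neg hiL, if_pos hjL] at hij
          exact absurd hij.symm (hw i (by omega))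
        · rw [if_neg hiL, if_neg hjL] at hij
          exact hinj i (by omega) j (by omega) hij
      · intro i hi
        by_cases hiL : i + 1 = L
        · have e1 : (if i = L then w else v i) = v i := if_neg (by omega)
          have e2 : (if i + 1 = L then w else v (i+1)) = w := if_pos hiL
          rw [e1, e2, show i = L - 1 by omega]
          exact hcond
        · have e1 : (if i = L then w else v i) = v i := if_neg (by omega)
          have e2 : (if i + 1 = L then w else v (i+1)) = v (i+1) := if_neg hiL
          rw [e1, e2]
          exact hedge i (by omega)
    have := hmax (L+1) hG
    omega
  have hLeven : L % 2 = 0 := by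
    by_contra hodd
    by_cases hlm : matchedBy M (v (L-1))
    · obtain ⟨w, hw⟩ := matchedBy_iff.1 hlm
      have hwN : ¬ inMatch N (v (L-1)) w := by
        intro hNe
        by_cases hL1' : L = 1
        · rw [show L - 1 = 0 by omega, hv0] at hNe
          exact hxN (matchedBy_of_inMatch hNe)
        · have harr := (hedge (L-2) (by omega)).2 (by omega)
          rw [show L - 2 + 1 = L - 1 by omega] at harr
          have hweq := inMatch_right_unique hNadj hNe (inMatch_symm harr.1)
          rw [hweq] at hw
          exact harr.2 (inMatch_symm hw)
      have hwnew : ∀ j < L, w ≠ v j := by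
        intro j hj heq
        rcases Nat.lt_or_ge j (L-1) with hjlt | hjge
        · obtain ⟨i, hi1, hi2, hji⟩ : ∃ i, i % 2 = 0 ∧ i + 1 < L ∧ (j = i ∨ j = i + 1) := by
            rcases Nat.even_or_odd j with h | h
            · exact ⟨j, Nat.even_iff.1 h, by omega, Or.inl rfl⟩
            · have := Nat.odd_iff.1 h
              exact ⟨j - 1, by omega, by omega, by omega⟩
          have him := hMedge i hi2 hi1
          have hwj : inMatch M (v j) (v (L-1)) := by rw [← heq]; exact inMatch_symm hw
          rcases hji with h6 | h6 <;> rw [h6] at hwj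
          · have h5 := inMatch_right_unique hM hwj him
            have := hinj (L-1) (by omega) (i+1) (by omega) h5
            omega
          · have h5 := inMatch_right_unique hM hwj (inMatch_symm him)
            have := hinj (L-1) (by omega) i (by omega) h5
            omega
        · rw [show j = L - 1 by omega] at heq
          exact inMatch_ne hM hw heq.symm
      exact hext w hwnew ⟨fun _ => ⟨hw, hwN⟩, fun h => absurd (by omega) h⟩
    · have hLne1 : L ≠ 1 := by
        intro h
        apply hlm
        rw [show L - 1 = 0 by omega, hv0]
        exact hx
      have hL3 : 3 ≤ L := by omega
      apply hno
      set p := (List.range L).map v with hpdef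
      have hplen : p.length = L := by simp [hpdef]
      have hpne : p ≠ [] := List.length_pos_iff.1 (by omega)
      have hpget : ∀ (i : ℕ) (h : i < p.length), p.get ⟨i, h⟩ = v i := by
        intro i h
        simp [hpdef, List.get_eq_getElem]
      have hphead : p.head hpne = x := by
        rw [List.head_eq_getElem_zero]
        simpa [hpdef] using hv0
      refine ⟨p, ⟨hpne, ?_, ?_, 0, ?_, ?_, ?_⟩, by rw [hplen]; omega, hpne, hphead⟩
      · exact List.Nodup.map_on
          (fun a ha b hb hab => hinj a (List.mem_range.1 ha) b (List.mem_range.1 hb) hab)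
          (List.nodup_range (n := L))
      · refine List.isChain_iff_getElem.2 ?_
        intro i h
        rw [show p[i] = v i from hpget i (by omega), show p[i+1] = v (i+1) from hpget (i+1) (by omega)]
        have h' : i + 1 < L := by omega
        by_cases hpar : i % 2 = 0
        · exact inMatch_adj hM hsymm (hMedge i h' hpar)
        · exact inMatch_adj hNadj hsymm (hNedge i h' hpar)
      · intro i h
        have h' : i + 1 < L := by rwa [hplen] at h
        rw [hpget i (Nat.lt_of_succ_lt h), hpget (i+1) h]
        constructor
        · intro hm
          by_contra hpar
          exact ((hedge i h').2 hpar).2 hm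
        · exact hMedge i h'
      · intro h _
        exact ⟨by rw [hplen]; omega, rfl⟩
      · intro h hml
        exfalso
        have hgl : p.getLast h = v (L-1) := by
          rw [List.getLast_eq_getElem]
          simp [hpdef]
        rw [hgl] at hml
        exact hlm hml
  have hL2 : 2 ≤ L := by omega
  have hlastN : ¬ matchedBy N (v (L-1)) := by
    intro hlm
    obtain ⟨w, hw⟩ := matchedBy_iff.1 hlm
    have harr := (hedge (L-2) (by omega)).1 (by omega)
    rw [show L - 2 + 1 = L - 1 by omega] at harr
    have hwM : ¬ inMatch M (v (L-1)) w := by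
      intro hMe
      have hweq := inMatch_right_unique hM hMe (inMatch_symm harr.1)
      rw [hweq] at hw
      exact harr.2 (inMatch_symm hw)
    have hwnew : ∀ j < L, w ≠ v j := by
      intro j hj heq
      have hmw : matchedBy N (v j) := by
        rw [← heq]
        exact matchedBy_of_inMatch (inMatch_symm hw)
      have hj0 : j ≠ 0 := by
        intro h
        rw [h, hv0] at hmw
        exact hxN hmw
      have hjL : j ≠ L - 1 := by
        intro h
        rw [h] at heq
        exact inMatch_ne hNadj hw heq.symm
      obtain ⟨i, hi1, hi2, hji⟩ : ∃ i, ¬ i % 2 = 0 ∧ i + 1 < L ∧ (j = i ∨ j = i + 1) := by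
        rcases Nat.even_or_odd j with h | h
        · have := Nat.even_iff.1 h
          exact ⟨j - 1, by omega, by omega, by omega⟩
        · have := Nat.odd_iff.1 h
          exact ⟨j, by omega, by omega, by omega⟩
      have hin := hNedge i hi2 hi1
      have hwj : inMatch N (v j) (v (L-1)) := by rw [← heq]; exact inMatch_symm hw
      rcases hji with h6 | h6 <;> rw [h6] at hwj
      · have h5 := inMatch_right_unique hNadj hwj hin
        have := hinj (L-1) (by omega) (i+1) (by omega) h5
        omega
      · have h5 := inMatch_right_unique hNadj hwj (inMatch_symm hin)
        have := hinj (L-1) (by omega) i (by omega) h5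
        omega
    exact hext w hwnew ⟨fun h => absurd h (by omega), fun _ => ⟨hw, hwM⟩⟩
  have hK : ∀ f ∈ N, (∃ j < L, f.1 = v j ∨ f.2 = v j) →
      ∃ i, i + 1 < L ∧ i % 2 = 1 ∧ (f = (v i, v (i+1)) ∨ f = (v (i+1), v i)) := by
    rintro f hf ⟨j, hj, hor⟩
    have hmj : matchedBy N (v j) := ⟨f, hf, hor⟩
    have hj0 : j ≠ 0 := by
      intro h
      rw [h, hv0] at hmj
      exact hxN hmj
    have hjL : j ≠ L - 1 := by
      intro h
      rw [h] at hmj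
      exact hlastN hmj
    obtain ⟨i, hi1, hi2, hji⟩ : ∃ i, ¬ i % 2 = 0 ∧ i + 1 < L ∧ (j = i ∨ j = i + 1) := by
      rcases Nat.even_or_odd j with h | h
      · have := Nat.even_iff.1 h
        exact ⟨j - 1, by omega, by omega, by omega⟩
      · have := Nat.odd_iff.1 h
        exact ⟨j, by omega, by omega, by omega⟩
    have hin := hNedge i hi2 hi1
    refine ⟨i, hi2, by omega, ?_⟩
    rcases hji with h6 | h6 <;> rw [h6] at hor
    · exact inMatch_eq_of_mem hNadj hin hf hor
    · rcases inMatch_eq_of_mem hNadj (inMatch_symm hin) hf hor with h | h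
      · exact Or.inr h
      · exact Or.inl h
  have hadj2 : ∀ i, i + 1 < L → ¬ i % 2 = 1 → adj (v i) (v (i+1)) := by
    intro i hi h
    exact inMatch_adj hM hsymm (hMedge i hi (by omega))
  obtain ⟨N', hN', hcard, hmem⟩ := toggle hNadj L hL2 v hinj 1 (by omega) hadj2 hK
  have hBeq : (range (L-1)).filter (fun i => ¬ i % 2 = 1) =
      (range (L-1)).filter (fun i => i % 2 = 0) :=
    Finset.filter_congr fun a _ => by constructor <;> (intro; omega)
  rw [hBeq, (card_range_filter_mod2 (L-1)).1, (card_range_filter_mod2 (L-1)).2] at hcard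
  have hle := hMmax N' hN'
  omega

end caseB


/-- Deleting a single node `x` from a bipartite graph: the maximum matching
cardinality drops by 1 exactly when `x` is matched by a maximum matching `M`
and no even-length alternating path for `M` starts at `x`; otherwise it is
unchanged. -/
theorem mm_delete_single_node
    (A B : Finset α) (hAB : Disjoint A B)
    (adj : α → α → Prop) (hsymm : ∀ a b, adj a b → adj b a)
    (hbip : ∀ a b, adj a b → (a ∈ A ∧ b ∈ B) ∨ (a ∈ B ∧ b ∈ A))
    (M : Finset (α × α)) (hM : IsUMatching adj M)
    (hMmax : ∀ M' : Finset (α × α), IsUMatching adj M' → M'.card ≤ M.card)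
    (x : α) :
    (matchedBy M x ∧ ¬ EvenAltFrom adj M x →
      mm (fun a b => adj a b ∧ a ≠ x ∧ b ≠ x) = mm adj - 1) ∧
    (¬ (matchedBy M x ∧ ¬ EvenAltFrom adj M x) →
      mm (fun a b => adj a b ∧ a ≠ x ∧ b ≠ x) = mm adj) := by
  classical
  have hmmM : mm adj = M.card := le_antisymm (mm_le hMmax) (le_mm hM)
  have hub : mm (fun a b => adj a b ∧ a ≠ x ∧ b ≠ x) ≤ mm adj :=
    mm_le fun N hN => le_mm ⟨fun e he => (hN.1 e he).1, hN.2.1, hN.2.2⟩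
  have hMd : IsUMatching (fun a b => adj a b ∧ a ≠ x ∧ b ≠ x)
      (M.filter (fun e => e.1 ≠ x ∧ e.2 ≠ x)) := by
    refine ⟨?_, ?_, ?_⟩
    · intro e he
      rw [Finset.mem_filter] at he
      exact ⟨hM.1 e he.1, he.2⟩
    · intro e he
      exact hM.2.1 e (Finset.mem_filter.1 he).1
    · intro e he f hf hef
      exact hM.2.2 e (Finset.mem_filter.1 he).1 f (Finset.mem_filter.1 hf).1 hef
  have hlb : M.card ≤ mm (fun a b => adj a b ∧ a ≠ x ∧ b ≠ x) + 1 := by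
    have hsplit := Finset.card_filter_add_card_filter_not
      (s := M) (p := fun e => e.1 ≠ x ∧ e.2 ≠ x)
    have htouch : (M.filter (fun e => ¬ (e.1 ≠ x ∧ e.2 ≠ x))).card ≤ 1 := by
      rw [Finset.card_le_one]
      intro e he f hf
      rw [Finset.mem_filter] at he hf
      have he2 : e.1 = x ∨ e.2 = x := by tauto
      have hf2 : f.1 = x ∨ f.2 = x := by tauto
      apply um_edge_eq hM he.1 hf.1
      rcases he2 with h1 | h1 <;> rcases hf2 with h2 | h2
      · exact Or.inl (h1.trans h2.symm)
      · exact Or.inr (Or.inl (h1.trans h2.symm))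
      · exact Or.inr (Or.inr (Or.inl (h1.trans h2.symm)))
      · exact Or.inr (Or.inr (Or.inr (h1.trans h2.symm)))
    have hcard := le_mm hMd
    omega
  constructor
  · rintro ⟨hmx, hno⟩
    rw [hmmM]
    apply le_antisymm
    · exact mm_le fun N hN => by
        have := caseB hM hsymm hmx hno hMmax hN
        omega
    · omega
  · intro h
    apply le_antisymm hub
    rw [hmmM]
    by_cases hmx : matchedBy M x
    · have hev : EvenAltFrom adj M x := by tauto
      obtain ⟨N', hN', hcard⟩ := caseA hM hsymm hmx hev
      exact le_trans hcard (le_mm hN')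
    · refine le_mm ⟨?_, hM.2.1, hM.2.2⟩
      intro e he
      refine ⟨hM.1 e he, ?_, ?_⟩
      · intro h1
        exact hmx ⟨e, he, Or.inl h1⟩
      · intro h2
        exact hmx ⟨e, he, Or.inr h2⟩
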